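/- arXiv:1206.3669 — 2 statements merged into one kernel-verified Lean document; each statement's English description precedes it below -/
import Mathlib

section
/- Let L be a finite-dimensional Lie algebra such that every proper quotient of L by a nonzero ideal is solvable, and suppose L is not solvable. Then L has a unique minimal ideal. -/
open LieAlgebra

/-- The quotient map `L → L ⧸ I` as a morphism of Lie algebras. -/
def lieQuotMap {F L : Type*} [Field F] [LieRing L] [LieAlgebra F L] (I : LieIdeal F L) :
    L →ₗ⁅F⁆ L ⧸ I :=
  { LieSubmodule.Quotient.mk' I with
    map_lie' := fun {_ _} => rfl }

lemma lieQuotMap_surjective {F L : Type*} [Field F] [LieRing L] [LieAlgebra F L]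
    (I : LieIdeal F L) : Function.Surjective (lieQuotMap I) :=
  LieSubmodule.Quotient.surjective_mk' I

lemma lieQuotMap_ker {F L : Type*} [Field F] [LieRing L] [LieAlgebra F L]
    (I : LieIdeal F L) : (lieQuotMap I).ker = I := by
  ext x
  simp only [LieHom.mem_ker]
  exact LieSubmodule.Quotient.mk_eq_zero I

lemma derivedSeries_le_of_solvable_quot {F L : Type*} [Field F] [LieRing L] [LieAlgebra F L]
    (I : LieIdeal F L) (h : LieAlgebra.IsSolvable (L ⧸ I)) :
    ∃ n, LieAlgebra.derivedSeries F L n ≤ I := by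
  obtain ⟨n, hn⟩ := (LieAlgebra.isSolvable_iff F _).mp h
  refine ⟨n, ?_⟩
  have hmap := LieIdeal.derivedSeries_map_eq (f := lieQuotMap I) n (lieQuotMap_surjective I)
  rw [hn] at hmap
  rw [← lieQuotMap_ker I]
  exact (LieIdeal.map_eq_bot_iff).mp hmap

/-- If every proper quotient of a finite-dimensional Lie algebra `L` by a
nonzero ideal is solvable and `L` is not solvable, then `L` has a unique minimal ideal. -/
theorem unique_minimal_ideal_of_proper_quotients_solvable
    (F : Type*) (L : Type*) [Field F] [LieRing L] [LieAlgebra F L]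
    [FiniteDimensional F L]
    (hquot : ∀ K : LieIdeal F L, K ≠ ⊥ → LieAlgebra.IsSolvable (L ⧸ K))
    (hns : ¬ LieAlgebra.IsSolvable L) :
    ∃! I : LieIdeal F L, I ≠ ⊥ ∧ ∀ J : LieIdeal F L, J ≤ I → J = ⊥ ∨ J = I := by
  -- key fact: any two nonzero ideals have nonzero intersection
  have key : ∀ I J : LieIdeal F L, I ≠ ⊥ → J ≠ ⊥ → I ⊓ J ≠ ⊥ := by
    intro I J hI hJ hIJ
    obtain ⟨n, hn⟩ := derivedSeries_le_of_solvable_quot I (hquot I hI)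
    obtain ⟨m, hm⟩ := derivedSeries_le_of_solvable_quot J (hquot J hJ)
    apply hns
    refine (LieAlgebra.isSolvable_iff F L).mpr ⟨n + m, ?_⟩
    rw [← le_bot_iff, ← hIJ]
    refine le_inf ?_ ?_
    · exact le_trans (LieAlgebra.derivedSeriesOfIdeal_antitone (I := ⊤) (Nat.le_add_right n m)) hn
    · exact le_trans (LieAlgebra.derivedSeriesOfIdeal_antitone (I := ⊤) (Nat.le_add_left m n)) hm
  -- existence of a minimal ideal, via atoms
  have htop : (⊤ : LieIdeal F L) ≠ ⊥ := by
    intro h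
    apply hns
    have : Subsingleton L := by
      constructor
      intro a b
      have ha : a ∈ (⊤ : LieIdeal F L) := trivial
      have hb : b ∈ (⊤ : LieIdeal F L) := trivial
      rw [h] at ha hb
      rw [LieSubmodule.mem_bot] at ha hb
      rw [ha, hb]
    infer_instance
  obtain ⟨I₀, hI₀atom, -⟩ := ((IsAtomic.eq_bot_or_exists_atom_le (⊤ : LieIdeal F L)).resolve_left htop)
  refine ⟨I₀, ⟨hI₀atom.1, fun J hJ => ?_⟩, ?_⟩
  · rcases lt_or_eq_of_le hJ with h | h
    · exact Or.inl (hI₀atom.2 J h)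
    · exact Or.inr h
  · rintro I ⟨hIne, hImin⟩
    have h1 : I ⊓ I₀ ≠ ⊥ := key I I₀ hIne hI₀atom.1
    have h2 : I ⊓ I₀ ≤ I := inf_le_left
    have h3 : I ⊓ I₀ ≤ I₀ := inf_le_right
    have hI : I ⊓ I₀ = I := (hImin _ h2).resolve_left h1
    have hI0 : I ⊓ I₀ = I₀ := by
      rcases lt_or_eq_of_le h3 with h | h
      · exact absurd (hI₀atom.2 _ h) h1
      · exact h
    rw [← hI, hI0]
end

section
/- Let L be a finite-dimensional Lie algebra over a field of prime characteristic p, let I be an ideal of codimension one in L, and let S be a finite-dimensional irreducible I-module. Then every composition factor of the restriction to I of the truncated coinduced L-module Hom_{O(L,I)}(U(L), S) is isomorphic to S. -/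
section TruncatedCoinduced

variable (F : Type*) (L : Type*) [Field F] [LieRing L] [LieAlgebra F L]

attribute [local instance 100] LieRing.ofAssociativeRing

/-- The canonical (degree) filtration of the universal enveloping algebra: the `k`-th
piece is spanned by products of at most `k` elements of (the image of) `L`. -/
def ueaFiltration (k : ℕ) : Submodule F (UniversalEnvelopingAlgebra F L) :=
  (Submodule.span F
    ({1} ∪ Set.range ⇑(UniversalEnvelopingAlgebra.ι F : L →ₗ⁅F⁆ _))) ^ k

variable (I : LieIdeal F L) (z : UniversalEnvelopingAlgebra F L)

/-- The subalgebra `O(L,I)` of `U(L)` generated by `I` together with the central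
element `z`. -/
def truncO : Subalgebra F (UniversalEnvelopingAlgebra F L) :=
  Algebra.adjoin F
    ((⇑(UniversalEnvelopingAlgebra.ι F : L →ₗ⁅F⁆ _) '' (I : Set L)) ∪ {z})

variable (S : Type*) [AddCommGroup S] [Module F S]
variable (ρ : ↥(truncO F L I z) →ₐ[F] Module.End F S)

/-- The truncated coinduced module `Hom_{O(L,I)}(U(L), S)`: the `O(L,I)`-equivariant
linear maps `U(L) → S`, where `O(L,I)` acts on `S` via `ρ`. -/
def coindHom : Submodule F (UniversalEnvelopingAlgebra F L →ₗ[F] S) where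
  carrier := {f | ∀ (o : ↥(truncO F L I z)) (a : UniversalEnvelopingAlgebra F L),
    f (↑o * a) = ρ o (f a)}
  add_mem' := fun {f g} hf hg o a => by
    simp [LinearMap.add_apply, hf o a, hg o a]
  zero_mem' := fun o a => by simp
  smul_mem' := fun c f hf o a => by
    simp [LinearMap.smul_apply, hf o a]

/-- The action of `x ∈ I ⊆ L` on `Hom_{O(L,I)}(U(L), S)` (the restriction to `I` of the
natural `L`-module structure on the coinduced module): `(x • f)(a) = f (a * ι x)`. -/
instance coindHomLieRingModule :
    LieRingModule ↥I ↥(coindHom F L I z S ρ) where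
  bracket x f :=
    ⟨(f : UniversalEnvelopingAlgebra F L →ₗ[F] S).comp
        (LinearMap.mulRight F (UniversalEnvelopingAlgebra.ι F (x : L))),
     fun o a => by
       simpa [LinearMap.comp_apply, LinearMap.mulRight_apply, mul_assoc]
         using f.2 o (a * UniversalEnvelopingAlgebra.ι F (x : L))⟩
  add_lie x y f := by
    ext a
    show (f : _ →ₗ[F] S) (a * UniversalEnvelopingAlgebra.ι F ((x : L) + (y : L))) = _
    simp [mul_add]
  lie_add x f g := by
    ext a
    rfl
  leibniz_lie x y f := by
    ext a
    show (f : _ →ₗ[F] S)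
        (a * UniversalEnvelopingAlgebra.ι F (x : L) *
          UniversalEnvelopingAlgebra.ι F (y : L)) =
      (f : _ →ₗ[F] S) (a * UniversalEnvelopingAlgebra.ι F ⁅(x : L), (y : L)⁆) +
        (f : _ →ₗ[F] S)
          (a * UniversalEnvelopingAlgebra.ι F (y : L) *
            UniversalEnvelopingAlgebra.ι F (x : L))
    rw [LieHom.map_lie, LieRing.of_associative_ring_bracket, ← map_add]
    congr 1
    noncomm_ring

instance coindHomLieModule [LieRingModule ↥I S] :
    LieModule F ↥I ↥(coindHom F L I z S ρ) where
  smul_lie c x f := by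
    ext a
    show (f : _ →ₗ[F] S)
        (a * UniversalEnvelopingAlgebra.ι F ((c • x : ↥I) : L)) =
      c • (f : _ →ₗ[F] S) (a * UniversalEnvelopingAlgebra.ι F (x : L))
    rw [show ((c • x : ↥I) : L) = c • (x : L) from rfl, map_smul,
      mul_smul_comm, LinearMap.map_smul]
  lie_smul c x f := by
    ext a
    rfl

end TruncatedCoinduced
section Aux
variable {F : Type*} {L : Type*} [Field F] [LieRing L] [LieAlgebra F L]

attribute [local instance 100] LieRing.ofAssociativeRing

open UniversalEnvelopingAlgebra

local notation "𝒰" => UniversalEnvelopingAlgebra F L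
local notation "ıL" => (UniversalEnvelopingAlgebra.ι F : L →ₗ⁅F⁆ UniversalEnvelopingAlgebra F L)

/-- Induction principle for the universal enveloping algebra. -/
theorem uea_induction {C : 𝒰 → Prop}
    (halg : ∀ r : F, C (algebraMap F 𝒰 r)) (hι : ∀ x : L, C (ıL x))
    (hmul : ∀ a b, C a → C b → C (a * b)) (hadd : ∀ a b, C a → C b → C (a + b))
    (u : 𝒰) : C u := by
  obtain ⟨a, rfl⟩ := RingCon.mkₐ_surjective (α := F) (ringCon F L) u
  change C (mkAlgHom F L a)
  induction a using TensorAlgebra.induction with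
  | algebraMap r => rw [AlgHom.commutes]; exact halg r
  | ι x => exact hι x
  | mul a b ha hb => rw [map_mul]; exact hmul _ _ ha hb
  | add a b ha hb => rw [map_add]; exact hadd _ _ ha hb

theorem ueaFiltration_mono {k l : ℕ} (h : k ≤ l) :
    ueaFiltration F L k ≤ ueaFiltration F L l := by
  unfold ueaFiltration
  induction l with
  | zero => simpa [Nat.le_zero.mp h] using le_rfl
  | succ l ih =>
    rcases Nat.lt_or_ge k (l+1) with hk | hk
    · refine (ih (Nat.lt_succ_iff.mp hk)).trans ?_
      rw [pow_succ]
      intro x hx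
      simpa using Submodule.mul_mem_mul hx
        (Submodule.subset_span (Set.mem_union_left _ (Set.mem_singleton 1)))
    · have : k = l + 1 := le_antisymm h hk
      subst this; exact le_rfl

theorem exists_mem_ueaFiltration (u : 𝒰) : ∃ k, u ∈ ueaFiltration F L k := by
  induction u using uea_induction with
  | halg r =>
    refine ⟨0, ?_⟩
    unfold ueaFiltration
    rw [pow_zero, Submodule.one_eq_span]
    have : algebraMap F 𝒰 r = r • (1 : 𝒰) := by simp [Algebra.smul_def]
    rw [this]
    exact Submodule.smul_mem _ _ (Submodule.subset_span rfl)
  | hι x =>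
    refine ⟨1, ?_⟩
    unfold ueaFiltration
    rw [pow_one]
    exact Submodule.subset_span (Or.inr ⟨x, rfl⟩)
  | hmul a b ha hb =>
    obtain ⟨k, hk⟩ := ha; obtain ⟨l, hl⟩ := hb
    refine ⟨k + l, ?_⟩
    unfold ueaFiltration at *
    rw [pow_add]
    exact Submodule.mul_mem_mul hk hl
  | hadd a b ha hb =>
    obtain ⟨k, hk⟩ := ha; obtain ⟨l, hl⟩ := hb
    exact ⟨k + l, add_mem (ueaFiltration_mono (Nat.le_add_right k l) hk)
      (ueaFiltration_mono (Nat.le_add_left l k) hl)⟩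

end Aux
section Aux2
variable {F : Type*} {L : Type*} [Field F] [LieRing L] [LieAlgebra F L]

attribute [local instance 100] LieRing.ofAssociativeRing

local notation "𝒰" => UniversalEnvelopingAlgebra F L
local notation "ıL" => (UniversalEnvelopingAlgebra.ι F : L →ₗ⁅F⁆ UniversalEnvelopingAlgebra F L)

variable (I : LieIdeal F L) (t : L)

/-- Span of the "lower order" terms `ι y * (ι t)^j`, `y ∈ I`, `j < i`. -/
def lowW (i : ℕ) : Submodule F 𝒰 :=
  Submodule.span F {u : 𝒰 | ∃ y ∈ I, ∃ j, j < i ∧ u = ıL y * (ıL t) ^ j}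

theorem lowW_mono {i i' : ℕ} (h : i ≤ i') : lowW I t i ≤ lowW I t i' :=
  Submodule.span_mono (fun u ⟨y, hy, j, hj, hu⟩ => ⟨y, hy, j, lt_of_lt_of_le hj h, hu⟩)

theorem iota_mul_iota (a b : L) : ıL a * ıL b = ıL b * ıL a + ıL ⁅a, b⁆ := by
  have h1 : ıL ⁅a, b⁆ = ıL a * ıL b - ıL b * ıL a := by
    rw [LieHom.map_lie, LieRing.of_associative_ring_bracket]
  rw [h1]; abel

theorem mulLeft_t_lowW {i : ℕ} {u : 𝒰} (hu : u ∈ lowW I t i) :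
    ıL t * u ∈ lowW I t (i + 1) := by
  have hle : lowW I t i ≤ Submodule.comap (LinearMap.mulLeft F (ıL t)) (lowW I t (i + 1)) := by
    rw [lowW, Submodule.span_le]
    rintro u ⟨y, hy, j, hj, rfl⟩
    simp only [Set.mem_setOf_eq, SetLike.mem_coe, Submodule.mem_comap, LinearMap.mulLeft_apply]
    have key : ıL t * (ıL y * (ıL t) ^ j) =
        ıL y * (ıL t) ^ (j + 1) + ıL ⁅t, y⁆ * (ıL t) ^ j := by
      rw [← mul_assoc, iota_mul_iota, add_mul, mul_assoc, ← pow_succ']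
    rw [key]
    exact add_mem
      (Submodule.subset_span ⟨y, hy, j + 1, by omega, rfl⟩)
      (Submodule.subset_span ⟨⁅t, y⁆, I.lie_mem hy, j, by omega, rfl⟩)
  exact hle hu

/-- Commutation: moving `ι x` past `(ι t)^i` changes things only by lower-order terms. -/
theorem commW (i : ℕ) (x : L) (hx : x ∈ I) :
    (ıL t) ^ i * ıL x - ıL x * (ıL t) ^ i ∈ lowW I t i := by
  induction i with
  | zero => rw [pow_zero, one_mul, mul_one, sub_self]; exact zero_mem _
  | succ i ih =>
    have key : (ıL t) ^ (i + 1) * ıL x - ıL x * (ıL t) ^ (i + 1) =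
        ıL t * ((ıL t) ^ i * ıL x - ıL x * (ıL t) ^ i) +
          ıL ⁅t, x⁆ * (ıL t) ^ i := by
      have e1 : ıL t * ıL x * (ıL t) ^ i =
          ıL x * (ıL t) ^ (i + 1) + ıL ⁅t, x⁆ * (ıL t) ^ i := by
        rw [iota_mul_iota t x, add_mul, mul_assoc, ← pow_succ']
      rw [mul_sub, ← mul_assoc, ← pow_succ', ← mul_assoc, e1]
      abel
    rw [key]
    exact add_mem (mulLeft_t_lowW I t ih)
      (Submodule.subset_span ⟨⁅t, x⁆, I.lie_mem hx, i, by omega, rfl⟩)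

variable (z : UniversalEnvelopingAlgebra F L)

/-- The span of `o * (ι t)^i` for `o ∈ O(L,I)` and `i ≤ j`. -/
def truncT (j : ℕ) : Submodule F 𝒰 :=
  Submodule.span F {u : 𝒰 | ∃ o ∈ truncO F L I z, ∃ i, i ≤ j ∧ u = o * (ıL t) ^ i}

theorem truncT_mono {j j' : ℕ} (h : j ≤ j') : truncT I t z j ≤ truncT I t z j' :=
  Submodule.span_mono (fun u ⟨o, ho, i, hi, hu⟩ => ⟨o, ho, i, hi.trans h, hu⟩)

theorem mem_truncT {o : 𝒰} (ho : o ∈ truncO F L I z) {i j : ℕ} (hij : i ≤ j) :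
    o * (ıL t) ^ i ∈ truncT I t z j :=
  Submodule.subset_span ⟨o, ho, i, hij, rfl⟩

theorem truncO_mul_truncT {o : 𝒰} (ho : o ∈ truncO F L I z) {j : ℕ} {u : 𝒰}
    (hu : u ∈ truncT I t z j) : o * u ∈ truncT I t z j := by
  have hle : truncT I t z j ≤ Submodule.comap (LinearMap.mulLeft F o) (truncT I t z j) := by
    rw [truncT, Submodule.span_le]
    rintro u ⟨o', ho', i, hi, rfl⟩
    simp only [Set.mem_setOf_eq, SetLike.mem_coe, Submodule.mem_comap,
      LinearMap.mulLeft_apply, ← mul_assoc]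
    exact mem_truncT I t z (mul_mem ho ho') hi
  exact hle hu

theorem iota_mem_truncO {y : L} (hy : y ∈ I) : ıL y ∈ truncO F L I z :=
  Algebra.subset_adjoin (Set.mem_union_left _ (Set.mem_image_of_mem _ hy))

theorem z_mem_truncO : z ∈ truncO F L I z :=
  Algebra.subset_adjoin (Set.mem_union_right _ rfl)

theorem lowW_le_truncT {i j : ℕ} (h : i ≤ j + 1) : lowW I t i ≤ truncT I t z j := by
  rw [lowW, Submodule.span_le]
  rintro u ⟨y, hy, j', hj', rfl⟩
  exact mem_truncT I t z (iota_mem_truncO I z hy) (by omega)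

theorem truncT_mul_iota_mem {x : L} (hx : x ∈ I) {j : ℕ} {u : 𝒰}
    (hu : u ∈ truncT I t z j) : u * ıL x ∈ truncT I t z j := by
  have hle : truncT I t z j ≤
      Submodule.comap (LinearMap.mulRight F (ıL x)) (truncT I t z j) := by
    rw [truncT, Submodule.span_le]
    rintro u ⟨o, ho, i, hi, rfl⟩
    simp only [Set.mem_setOf_eq, SetLike.mem_coe, Submodule.mem_comap,
      LinearMap.mulRight_apply]
    have key : o * (ıL t) ^ i * ıL x =
        o * ıL x * (ıL t) ^ i + o * ((ıL t) ^ i * ıL x - ıL x * (ıL t) ^ i) := by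
      rw [mul_sub, ← mul_assoc, ← mul_assoc]
      abel
    rw [key]
    refine add_mem (mem_truncT I t z (mul_mem ho (iota_mem_truncO I z hx)) hi) ?_
    exact truncO_mul_truncT I t z ho
      (lowW_le_truncT I t z (by omega) (commW I t i x hx))
  exact hle hu

theorem truncT_mul_t_mem {N : ℕ} (hN : 0 < N) {v : 𝒰}
    (hz : z = (ıL t) ^ N + v) {j : ℕ} (hj : j ≤ N - 1)
    (hv : j = N - 1 → v ∈ truncT I t z (N - 1)) {u : 𝒰}
    (hu : u ∈ truncT I t z j) : u * ıL t ∈ truncT I t z (min (j + 1) (N - 1)) := by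
  have hle : truncT I t z j ≤
      Submodule.comap (LinearMap.mulRight F (ıL t)) (truncT I t z (min (j + 1) (N - 1))) := by
    rw [truncT, Submodule.span_le]
    rintro u ⟨o, ho, i, hi, rfl⟩
    simp only [Set.mem_setOf_eq, SetLike.mem_coe, Submodule.mem_comap,
      LinearMap.mulRight_apply, mul_assoc, ← pow_succ]
    rcases Nat.lt_or_ge (i + 1) N with hiN | hiN
    · exact mem_truncT I t z ho (by omega)
    · have hNi : i + 1 = N := by omega
      have hjN : j = N - 1 := by omega
      have key : o * (ıL t) ^ (i + 1) = o * z - o * v := by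
        rw [hNi, hz, mul_add]
        abel
      rw [key]
      refine sub_mem ?_ ?_
      · have h0 : o * z = o * z * (ıL t) ^ 0 := by rw [pow_zero, mul_one]
        rw [h0]
        exact mem_truncT I t z (mul_mem ho (z_mem_truncO I z)) (by omega)
      · exact truncT_mono I t z (by omega)
          (truncO_mul_truncT I t z ho (hv hjN))
  exact hle hu

end Aux2
section Aux3
variable {F : Type*} {L : Type*} [Field F] [LieRing L] [LieAlgebra F L]

attribute [local instance 100] LieRing.ofAssociativeRing

local notation "𝒰" => UniversalEnvelopingAlgebra F L
local notation "ıL" => (UniversalEnvelopingAlgebra.ι F : L →ₗ⁅F⁆ UniversalEnvelopingAlgebra F L)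

variable (I : LieIdeal F L) (t : L)

theorem exists_codim_dec (ht : t ∉ I) (hcodim : Module.finrank F (L ⧸ I) = 1) (y : L) :
    ∃ c : F, y - c • t ∈ I := by
  set tb : L ⧸ I := LieSubmodule.Quotient.mk (N := I) t with htb
  have htb0 : tb ≠ 0 := by
    intro h0
    rw [htb] at h0
    exact ht (LieSubmodule.Quotient.mk_eq_zero'.mp h0)
  have hspan : Submodule.span F {tb} = ⊤ :=
    (finrank_eq_one_iff_of_nonzero tb htb0).mp hcodim
  have hy : (LieSubmodule.Quotient.mk (N := I) y : L ⧸ I) ∈ Submodule.span F {tb} := by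
    rw [hspan]; trivial
  obtain ⟨c, hc⟩ := Submodule.mem_span_singleton.mp hy
  refine ⟨c, ?_⟩
  rw [← LieSubmodule.Quotient.mk_eq_zero']
  have : LieSubmodule.Quotient.mk (N := I) (y - c • t)
      = LieSubmodule.Quotient.mk (N := I) y - c • tb := by
    rw [htb]
    rfl
  rw [this, ← hc, sub_self]

variable (z : UniversalEnvelopingAlgebra F L)

theorem ueaFiltration_le_truncT {N : ℕ} (hN : 0 < N) {v : 𝒰}
    (hz : z = (ıL t) ^ N + v) (hvfil : v ∈ ueaFiltration F L (N - 1))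
    (hdec : ∀ y : L, ∃ c : F, y - c • t ∈ I) :
    ∀ k, ueaFiltration F L k ≤ truncT I t z (min k (N - 1)) := by
  intro k
  induction k using Nat.strong_induction_on with
  | _ k ih =>
    match k with
    | 0 =>
      unfold ueaFiltration
      rw [pow_zero, Submodule.one_eq_span, Submodule.span_le, Set.singleton_subset_iff]
      have h1 : (1 : 𝒰) = 1 * (ıL t) ^ 0 := by rw [pow_zero, mul_one]
      rw [SetLike.mem_coe, h1]
      exact mem_truncT I t z (one_mem _) (by omega)
    | (k + 1) =>
      show ueaFiltration F L (k + 1) ≤ _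
      have hpow : ueaFiltration F L (k + 1)
          = ueaFiltration F L k * ueaFiltration F L 1 := by
        unfold ueaFiltration
        rw [pow_one, ← pow_succ]
      rw [hpow]
      refine Submodule.mul_le.mpr (fun m hm g hg => ?_)
      have hmT : m ∈ truncT I t z (min k (N - 1)) := ih k (by omega) hm
      have hg' : g ∈ Submodule.span F
          ({1} ∪ Set.range (ıL : L →ₗ⁅F⁆ 𝒰)) := by
        have : ueaFiltration F L 1
            = Submodule.span F ({1} ∪ Set.range (ıL : L →ₗ⁅F⁆ 𝒰)) := by
          unfold ueaFiltration; rw [pow_one]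
        rwa [this] at hg
      clear hg
      induction hg' using Submodule.span_induction generalizing m with
      | mem g hgmem =>
        rcases hgmem with hg1 | ⟨y, rfl⟩
        · rw [Set.mem_singleton_iff] at hg1
          subst hg1
          rw [mul_one]
          exact truncT_mono I t z (by omega) hmT
        · obtain ⟨c, hc⟩ := hdec y
          have hysplit : (ıL) y = c • (ıL) t + (ıL) (y - c • t) := by
            rw [← map_smul, ← map_add]
            congr 1
            abel
          rw [hysplit, mul_add, mul_smul_comm]
          refine add_mem (Submodule.smul_mem _ _ ?_) ?_
          · -- m * ι t
            have hvT : min k (N-1) = N - 1 → v ∈ truncT I t z (N - 1) := by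
              intro hkN
              have hNk : N - 1 ≤ k := by omega
              have := ih (N - 1) (by omega) hvfil
              simpa [min_self] using this
            have := truncT_mul_t_mem I t z hN hz (by omega) hvT hmT
            exact truncT_mono I t z (by omega) this
          · exact truncT_mono I t z (by omega)
              (truncT_mul_iota_mem I t z hc hmT)
      | zero => rw [mul_zero]; exact zero_mem _
      | add a b _ _ ha hb =>
        rw [mul_add]
        exact add_mem (ha m hm hmT) (hb m hm hmT)
      | smul c a _ ha =>
        rw [mul_smul_comm]
        exact Submodule.smul_mem _ _ (ha m hm hmT)

theorem truncT_eq_top {N : ℕ} (hN : 0 < N) {v : 𝒰}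
    (hz : z = (ıL t) ^ N + v) (hvfil : v ∈ ueaFiltration F L (N - 1))
    (hdec : ∀ y : L, ∃ c : F, y - c • t ∈ I) (u : 𝒰) :
    u ∈ truncT I t z (N - 1) := by
  obtain ⟨k, hk⟩ := exists_mem_ueaFiltration u
  exact truncT_mono I t z (by omega)
    (ueaFiltration_le_truncT I t z hN hz hvfil hdec k hk)
end Aux3
section Aux4
variable {F : Type*} {L : Type*} [Field F] [LieRing L] [LieAlgebra F L]

attribute [local instance 100] LieRing.ofAssociativeRing

local notation "𝒰" => UniversalEnvelopingAlgebra F L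
local notation "ıL" => (UniversalEnvelopingAlgebra.ι F : L →ₗ⁅F⁆ UniversalEnvelopingAlgebra F L)

variable (I : LieIdeal F L) (t : L) (z : UniversalEnvelopingAlgebra F L)
variable {S : Type*} [AddCommGroup S] [Module F S]
variable (ρ : ↥(truncO F L I z) →ₐ[F] Module.End F S)

theorem coindHom_bracket_apply (x : ↥I) (f : ↥(coindHom F L I z S ρ))
    (a : 𝒰) : ((⁅x, f⁆ : ↥(coindHom F L I z S ρ)) : 𝒰 →ₗ[F] S) a
      = (f : 𝒰 →ₗ[F] S) (a * ıL (x : L)) := rfl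

theorem coindHom_apply_o_mul (f : ↥(coindHom F L I z S ρ)) {o : 𝒰}
    (ho : o ∈ truncO F L I z) (a : 𝒰) :
    (f : 𝒰 →ₗ[F] S) (o * a) = ρ ⟨o, ho⟩ ((f : 𝒰 →ₗ[F] S) a) :=
  f.2 ⟨o, ho⟩ a

theorem coindHom_eval_lowW_eq_zero (f : ↥(coindHom F L I z S ρ)) {k : ℕ}
    (hf : ∀ j, j < k → (f : 𝒰 →ₗ[F] S) ((ıL t) ^ j) = 0)
    {w : 𝒰} (hw : w ∈ lowW I t k) : (f : 𝒰 →ₗ[F] S) w = 0 := by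
  have hle : lowW I t k ≤ LinearMap.ker (f : 𝒰 →ₗ[F] S) := by
    rw [lowW, Submodule.span_le]
    rintro w ⟨y, hy, j, hj, rfl⟩
    rw [SetLike.mem_coe, LinearMap.mem_ker,
      coindHom_apply_o_mul I z ρ f (iota_mem_truncO I z hy), hf j hj, map_zero]
  exact LinearMap.mem_ker.mp (hle hw)

variable [LieRingModule ↥I S]

/-- The filtration of the truncated coinduced module by vanishing order. -/
def coindFilt (k : ℕ) : LieSubmodule F ↥I ↥(coindHom F L I z S ρ) where
  carrier := {f | ∀ j, j < k → (f : 𝒰 →ₗ[F] S) ((ıL t) ^ j) = 0}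
  add_mem' := fun {f g} hf hg j hj => by
    have : ((f + g : ↥(coindHom F L I z S ρ)) : 𝒰 →ₗ[F] S)
        = (f : 𝒰 →ₗ[F] S) + (g : 𝒰 →ₗ[F] S) := rfl
    rw [this, LinearMap.add_apply, hf j hj, hg j hj, add_zero]
  zero_mem' := fun j hj => rfl
  smul_mem' := fun c f hf j hj => by
    have : ((c • f : ↥(coindHom F L I z S ρ)) : 𝒰 →ₗ[F] S)
        = c • (f : 𝒰 →ₗ[F] S) := rfl
    rw [this, LinearMap.smul_apply, hf j hj, smul_zero]
  lie_mem := fun {x f} hf j hj => by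
    rw [coindHom_bracket_apply]
    have key : (ıL t) ^ j * ıL (x : L) = ıL (x : L) * (ıL t) ^ j +
        ((ıL t) ^ j * ıL (x : L) - ıL (x : L) * (ıL t) ^ j) := by abel
    rw [key, map_add,
      coindHom_apply_o_mul I z ρ f (iota_mem_truncO I z x.2), hf j hj, map_zero,
      coindHom_eval_lowW_eq_zero I t z ρ f
        (fun j' hj' => hf j' (hj'.trans hj)) (commW I t j (x : L) x.2),
      add_zero]

theorem mem_coindFilt_iff (k : ℕ) (f : ↥(coindHom F L I z S ρ)) :
    f ∈ coindFilt I t z ρ k ↔ ∀ j, j < k → (f : 𝒰 →ₗ[F] S) ((ıL t) ^ j) = 0 :=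
  Iff.rfl

/-- Equivariance of evaluation at `(ι t)^k` on the `k`-th filtration step. -/
theorem coindFilt_eval_lie {k : ℕ} {f : ↥(coindHom F L I z S ρ)}
    (hf : f ∈ coindFilt I t z ρ k) (x : ↥I) :
    ((⁅x, f⁆ : ↥(coindHom F L I z S ρ)) : 𝒰 →ₗ[F] S) ((ıL t) ^ k)
      = ρ ⟨ıL (x : L), iota_mem_truncO I z x.2⟩ ((f : 𝒰 →ₗ[F] S) ((ıL t) ^ k)) := by
  rw [coindHom_bracket_apply]
  have key : (ıL t) ^ k * ıL (x : L) = ıL (x : L) * (ıL t) ^ k +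
      ((ıL t) ^ k * ıL (x : L) - ıL (x : L) * (ıL t) ^ k) := by abel
  rw [key, map_add,
    coindHom_apply_o_mul I z ρ f (iota_mem_truncO I z x.2),
    coindHom_eval_lowW_eq_zero I t z ρ f hf (commW I t k (x : L) x.2), add_zero]

/-- If `f` vanishes at `(ι t)^j` for all `j < N` and `U(L)` is spanned, then `f = 0`. -/
theorem coindFilt_eq_bot {N : ℕ} (hN : 0 < N) {v : 𝒰}
    (hz : z = (ıL t) ^ N + v) (hvfil : v ∈ ueaFiltration F L (N - 1))
    (hdec : ∀ y : L, ∃ c : F, y - c • t ∈ I)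
    {f : ↥(coindHom F L I z S ρ)} (hf : f ∈ coindFilt I t z ρ N) : f = 0 := by
  have hker : ∀ u : 𝒰, (f : 𝒰 →ₗ[F] S) u = 0 := by
    intro u
    have hu : u ∈ truncT I t z (N - 1) := truncT_eq_top I t z hN hz hvfil hdec u
    have hle : truncT I t z (N - 1) ≤ LinearMap.ker (f : 𝒰 →ₗ[F] S) := by
      rw [truncT, Submodule.span_le]
      rintro u ⟨o, ho, i, hi, rfl⟩
      rw [SetLike.mem_coe, LinearMap.mem_ker,
        coindHom_apply_o_mul I z ρ f ho, hf i (by omega), map_zero]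
    exact LinearMap.mem_ker.mp (hle hu)
  apply Subtype.ext
  exact LinearMap.ext hker

end Aux4
section AuxEquiv
/-- Generic principle: two surjective equivariant linear maps with the same kernel
induce an equivalence of targets. -/
theorem nonempty_lieModuleEquiv_of_maps
    {R : Type*} [CommRing R] {Lg : Type*} [LieRing Lg]
    {M₁ M₂ M₃ : Type*}
    [AddCommGroup M₁] [Module R M₁] [LieRingModule Lg M₁]
    [AddCommGroup M₂] [Module R M₂] [LieRingModule Lg M₂]
    [AddCommGroup M₃] [Module R M₃] [LieRingModule Lg M₃]
    (α : M₁ →ₗ[R] M₂) (β : M₁ →ₗ[R] M₃)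
    (hα_lie : ∀ (x : Lg) (m : M₁), α ⁅x, m⁆ = ⁅x, α m⁆)
    (hβ_lie : ∀ (x : Lg) (m : M₁), β ⁅x, m⁆ = ⁅x, β m⁆)
    (hαsur : Function.Surjective α) (hβsur : Function.Surjective β)
    (hker : ∀ m, α m = 0 ↔ β m = 0) :
    Nonempty (M₂ ≃ₗ⁅R,Lg⁆ M₃) := by
  have hkerle : LinearMap.ker α ≤ LinearMap.ker β := by
    intro m hm
    rw [LinearMap.mem_ker] at hm ⊢
    exact (hker m).mp hm
  set δα : (M₁ ⧸ LinearMap.ker α) →ₗ[R] M₂ :=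
    (LinearMap.ker α).liftQ α le_rfl with hδα
  set δβ : (M₁ ⧸ LinearMap.ker α) →ₗ[R] M₃ :=
    (LinearMap.ker α).liftQ β hkerle with hδβ
  have hδα_bij : Function.Bijective δα := by
    constructor
    · rw [← LinearMap.ker_eq_bot]
      exact Submodule.ker_liftQ_eq_bot _ _ _ le_rfl
    · intro u
      obtain ⟨m, hm⟩ := hαsur u
      exact ⟨Submodule.Quotient.mk m, by rw [hδα, Submodule.liftQ_apply, hm]⟩
  have hδβ_bij : Function.Bijective δβ := by
    constructor
    · rw [← LinearMap.ker_eq_bot]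
      exact Submodule.ker_liftQ_eq_bot _ _ _ (fun m hm => by
        rw [LinearMap.mem_ker] at hm ⊢
        exact (hker m).mpr hm)
    · intro s
      obtain ⟨m, hm⟩ := hβsur s
      exact ⟨Submodule.Quotient.mk m, by rw [hδβ, Submodule.liftQ_apply, hm]⟩
  set eα := LinearEquiv.ofBijective δα hδα_bij with heα
  set eβ := LinearEquiv.ofBijective δβ hδβ_bij with heβ
  set e : M₂ ≃ₗ[R] M₃ := eα.symm.trans eβ with he
  have hkey : ∀ m : M₁, e (α m) = β m := by
    intro m
    have h1 : eα (Submodule.Quotient.mk m) = α m := by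
      rw [heα, LinearEquiv.ofBijective_apply, hδα, Submodule.liftQ_apply]
    have h2 : eα.symm (α m) = Submodule.Quotient.mk m := by
      rw [← h1, LinearEquiv.symm_apply_apply]
    show eβ (eα.symm (α m)) = β m
    rw [h2, heβ, LinearEquiv.ofBijective_apply, Submodule.liftQ_apply]
  refine ⟨{ toLinearMap := (e : M₂ →ₗ[R] M₃)
            map_lie' := ?_
            invFun := e.symm
            left_inv := e.left_inv
            right_inv := e.right_inv }⟩
  intro x u
  obtain ⟨m, rfl⟩ := hαsur u
  show e ⁅x, α m⁆ = ⁅x, e (α m)⁆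
  rw [← hα_lie, hkey, hkey, hβ_lie]
end AuxEquiv
section Aux5
variable {F : Type*} {L : Type*} [Field F] [LieRing L] [LieAlgebra F L]

attribute [local instance 100] LieRing.ofAssociativeRing

local notation "𝒰" => UniversalEnvelopingAlgebra F L
local notation "ıL" => (UniversalEnvelopingAlgebra.ι F : L →ₗ⁅F⁆ UniversalEnvelopingAlgebra F L)

set_option synthInstance.maxHeartbeats 1000000 in
set_option maxHeartbeats 2000000 in
theorem truncated_coinduced_main
    (I : LieIdeal F L) (t : L) (z : 𝒰)
    {S : Type*} [AddCommGroup S] [Module F S] [LieRingModule ↥I S] [LieModule F ↥I S]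
    (ρ : ↥(truncO F L I z) →ₐ[F] Module.End F S)
    (hS : LieModule.IsIrreducible F ↥I S)
    {N : ℕ} (hN : 0 < N) {v : 𝒰}
    (hz : z = (ıL t) ^ N + v) (hvfil : v ∈ ueaFiltration F L (N - 1))
    (hdec : ∀ y : L, ∃ c : F, y - c • t ∈ I)
    (hρ : ∀ (x : L) (hx : x ∈ I) (s : S),
      ρ ⟨ıL x,
        Algebra.subset_adjoin (Set.mem_union_left _ (Set.mem_image_of_mem _ hx))⟩ s =
        ⁅(⟨x, hx⟩ : ↥I), s⁆)
    (P Q : LieSubmodule F ↥I ↥(coindHom F L I z S ρ)) (hPQ : P ≤ Q)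
    (hirr : LieModule.IsIrreducible F ↥I
      ↥(LieSubmodule.map (LieSubmodule.Quotient.mk' P) Q)) :
    Nonempty (↥(LieSubmodule.map (LieSubmodule.Quotient.mk' P) Q) ≃ₗ⁅F,↥I⁆ S) := by
  classical
  set π := LieSubmodule.Quotient.mk' P with hπ
  set T := LieSubmodule.map π Q with hT
  -- `T ≠ ⊥`: there is `f₀' ∈ Q` with `f₀' ∉ P`
  have hTne : ∃ f : (↥(coindHom F L I z S ρ)), f ∈ Q ∧ f ∉ P := by
    by_contra hcon
    push_neg at hcon
    have hTbot : (⊥ : LieSubmodule F ↥I ↥T) = ⊤ := by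
      ext x
      simp only [LieSubmodule.mem_bot, LieSubmodule.mem_top, iff_true]
      have hx : (x : ↥(coindHom F L I z S ρ) ⧸ P) ∈ T := x.2
      obtain ⟨f, hfQ, hfx⟩ := (LieSubmodule.mem_map _).mp hx
      have h0 : π f = 0 := (LieSubmodule.Quotient.mk_eq_zero P).mpr (hcon f hfQ)
      exact Subtype.ext (hfx ▸ h0)
    exact hirr.bot_ne_top hTbot
  -- the first level of the filtration entirely inside `P`
  have hexists : ∃ n, ∀ f : (↥(coindHom F L I z S ρ)), f ∈ Q → f ∈ coindFilt I t z ρ n → f ∈ P := by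
    refine ⟨N, fun f _ hf => ?_⟩
    rw [coindFilt_eq_bot I t z ρ hN hz hvfil hdec hf]
    exact P.zero_mem
  obtain ⟨n, hnspec, hnmin⟩ : ∃ n, (∀ f : (↥(coindHom F L I z S ρ)), f ∈ Q →
      f ∈ coindFilt I t z ρ n → f ∈ P) ∧ ∀ m, m < n →
      ¬(∀ f : (↥(coindHom F L I z S ρ)), f ∈ Q → f ∈ coindFilt I t z ρ m → f ∈ P) :=
    ⟨Nat.find hexists, Nat.find_spec hexists, fun m hm => Nat.find_min hexists hm⟩
  match n, hnspec, hnmin with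
  | 0, hnspec, hnmin =>
    obtain ⟨f₀, hf₀Q, hf₀P⟩ := hTne
    exact absurd (hnspec f₀ hf₀Q (fun j hj => absurd hj (Nat.not_lt_zero j))) hf₀P
  | (k + 1), hk2, hnmin =>
  have hk1 : ∃ f : (↥(coindHom F L I z S ρ)), f ∈ Q ∧ f ∈ coindFilt I t z ρ k ∧ f ∉ P := by
    have := hnmin k (by omega)
    push_neg at this
    obtain ⟨f, h1, h2, h3⟩ := this
    exact ⟨f, h1, h2, h3⟩
  obtain ⟨f₀, hf₀Q, hf₀F, hf₀P⟩ := hk1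
  set R : LieSubmodule F ↥I (↥(coindHom F L I z S ρ)) := Q ⊓ coindFilt I t z ρ k with hR
  have hf₀R : f₀ ∈ R := ⟨hf₀Q, hf₀F⟩
  -- the evaluation map `β`
  set tk : 𝒰 := (ıL t) ^ k with htk
  set βₗ : ↥R →ₗ[F] S :=
    { toFun := fun r => ((r : (↥(coindHom F L I z S ρ))) : 𝒰 →ₗ[F] S) tk
      map_add' := fun a b => rfl
      map_smul' := fun c a => rfl } with hβdef
  have hβ_apply : ∀ r : ↥R, βₗ r = ((r : (↥(coindHom F L I z S ρ))) : 𝒰 →ₗ[F] S) tk := fun _ => rfl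
  have hβ_lie : ∀ (x : ↥I) (r : ↥R), βₗ ⁅x, r⁆ = ⁅x, βₗ r⁆ := by
    intro x r
    have h1 : ((⁅x, r⁆ : ↥R) : (↥(coindHom F L I z S ρ))) = ⁅x, (r : (↥(coindHom F L I z S ρ)))⁆ := rfl
    rw [hβ_apply, hβ_apply, h1, htk,
      coindFilt_eval_lie I t z ρ (r.2.2) x, hρ (x : L) x.2]
  -- `β` kills `M_{k+1}`-type elements
  have hβ_zero_mem : ∀ r : ↥R, βₗ r = 0 → (r : (↥(coindHom F L I z S ρ))) ∈ coindFilt I t z ρ (k + 1) := by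
    intro r hr j hj
    rcases Nat.lt_succ_iff_lt_or_eq.mp hj with h | h
    · exact r.2.2 j h
    · rw [h]; exact hr
  -- `β` is surjective (irreducibility of `S`)
  have hβsur : Function.Surjective βₗ := by
    set A : LieSubmodule F ↥I S :=
      { toSubmodule := LinearMap.range βₗ
        lie_mem := fun {x s} hs => by
          obtain ⟨r, rfl⟩ := hs
          exact ⟨⁅x, r⁆, hβ_lie x r⟩ } with hA
    have hAne : A ≠ ⊥ := by
      intro hbot
      have h1 : βₗ ⟨f₀, hf₀R⟩ ∈ A := ⟨⟨f₀, hf₀R⟩, rfl⟩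
      rw [hbot, LieSubmodule.mem_bot] at h1
      exact hf₀P (hk2 f₀ hf₀Q (hβ_zero_mem ⟨f₀, hf₀R⟩ h1))
    have hAtop : A = ⊤ := (hS.eq_bot_or_eq_top A).resolve_left hAne
    intro s
    have : s ∈ A := by rw [hAtop]; trivial
    exact this
  -- the projection map `α`
  set αₗ : ↥R →ₗ[F] ↥T :=
    { toFun := fun r => ⟨π (r : (↥(coindHom F L I z S ρ))),
        (LieSubmodule.mem_map _).mpr ⟨(r : (↥(coindHom F L I z S ρ))), r.2.1, rfl⟩⟩
      map_add' := fun a b => Subtype.ext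
        (map_add π (a : (↥(coindHom F L I z S ρ))) (b : (↥(coindHom F L I z S ρ))))
      map_smul' := fun c a => Subtype.ext
        (map_smul π c (a : (↥(coindHom F L I z S ρ)))) } with hαdef
  have hα_apply : ∀ r : ↥R, (αₗ r : ↥(coindHom F L I z S ρ) ⧸ P) = π (r : (↥(coindHom F L I z S ρ))) :=
    fun _ => rfl
  have hα_lie : ∀ (x : ↥I) (r : ↥R), αₗ ⁅x, r⁆ = ⁅x, αₗ r⁆ := by
    intro x r
    apply Subtype.ext
    rw [hα_apply]
    have h1 : ((⁅x, r⁆ : ↥R) : (↥(coindHom F L I z S ρ))) = ⁅x, (r : (↥(coindHom F L I z S ρ)))⁆ := rfl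
    have h2 : ((⁅x, αₗ r⁆ : ↥T) : ↥(coindHom F L I z S ρ) ⧸ P)
        = ⁅x, (αₗ r : ↥(coindHom F L I z S ρ) ⧸ P)⁆ := rfl
    rw [h1, h2, hα_apply]
    exact LieModuleHom.map_lie π x (r : (↥(coindHom F L I z S ρ)))
  -- `α` is surjective (irreducibility of `T`)
  have hαsur : Function.Surjective αₗ := by
    set T' := LieSubmodule.map π R with hT'
    have hT'T : ∀ u, u ∈ T' → u ∈ T := by
      intro u hu
      obtain ⟨f, hfR, rfl⟩ := (LieSubmodule.mem_map _).mp hu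
      exact (LieSubmodule.mem_map _).mpr ⟨f, hfR.1, rfl⟩
    set G : LieSubmodule F ↥I ↥T := LieSubmodule.comap T.incl T' with hG
    have hGne : G ≠ ⊥ := by
      intro hbot
      have h1 : π f₀ ∈ T' := (LieSubmodule.mem_map _).mpr ⟨f₀, hf₀R, rfl⟩
      have h2 : (⟨π f₀, hT'T _ h1⟩ : ↥T) ∈ G := by
        rw [hG, LieSubmodule.mem_comap]
        exact h1
      rw [hbot, LieSubmodule.mem_bot] at h2
      have h3 : π f₀ = 0 := by
        have := congrArg (fun u : ↥T => (u : ↥(coindHom F L I z S ρ) ⧸ P)) h2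
        simpa using this
      exact hf₀P ((LieSubmodule.Quotient.mk_eq_zero P).mp h3)
    have hGtop : G = ⊤ := (hirr.eq_bot_or_eq_top G).resolve_left hGne
    intro u
    have hu : u ∈ G := by rw [hGtop]; trivial
    rw [hG, LieSubmodule.mem_comap] at hu
    have : T.incl u ∈ T' := hu
    obtain ⟨r, hrR, hru⟩ := (LieSubmodule.mem_map _).mp this
    exact ⟨⟨r, hrR⟩, Subtype.ext hru⟩
  -- `β` vanishes on `P ∩ R` (irreducibility of `S` again)
  have hβP : ∀ r : ↥R, (r : (↥(coindHom F L I z S ρ))) ∈ P → βₗ r = 0 := by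
    set PR : Submodule F ↥R :=
      Submodule.comap ((R : Submodule F (↥(coindHom F L I z S ρ))).subtype) (P : Submodule F (↥(coindHom F L I z S ρ))) with hPR
    have hPRmem : ∀ r : ↥R, r ∈ PR ↔ (r : (↥(coindHom F L I z S ρ))) ∈ P := fun r => Iff.rfl
    set B : LieSubmodule F ↥I S :=
      { toSubmodule := Submodule.map βₗ PR
        lie_mem := fun {x s} hs => by
          obtain ⟨r, hrP, rfl⟩ := hs
          refine ⟨⁅x, r⁆, ?_, hβ_lie x r⟩
          have hrP' : (r : (↥(coindHom F L I z S ρ))) ∈ P := hrP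
          exact P.lie_mem hrP' } with hB
    have hBne : B ≠ ⊤ := by
      intro htop
      have h1 : βₗ ⟨f₀, hf₀R⟩ ∈ B := by rw [htop]; trivial
      obtain ⟨g, hgP', hgb⟩ := h1
      have hgP : (g : (↥(coindHom F L I z S ρ))) ∈ P := hgP'
      have hdiff : βₗ (⟨f₀, hf₀R⟩ - g) = 0 := by
        rw [map_sub, hgb, sub_self]
      have hmem : ((⟨f₀, hf₀R⟩ - g : ↥R) : (↥(coindHom F L I z S ρ))) ∈ coindFilt I t z ρ (k + 1) :=
        hβ_zero_mem _ hdiff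
      have hQmem : ((⟨f₀, hf₀R⟩ - g : ↥R) : (↥(coindHom F L I z S ρ))) ∈ Q := (⟨f₀, hf₀R⟩ - g : ↥R).2.1
      have hPmem := hk2 _ hQmem hmem
      have : f₀ = ((⟨f₀, hf₀R⟩ - g : ↥R) : (↥(coindHom F L I z S ρ))) + (g : (↥(coindHom F L I z S ρ))) := by
        have hcoe : ((⟨f₀, hf₀R⟩ - g : ↥R) : (↥(coindHom F L I z S ρ))) = f₀ - (g : (↥(coindHom F L I z S ρ))) := rfl
        rw [hcoe, sub_add_cancel]
      rw [this] at hf₀P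
      exact hf₀P (P.add_mem hPmem hgP)
    have hBbot : B = ⊥ := (hS.eq_bot_or_eq_top B).resolve_right hBne
    intro r hrP
    have h1 : βₗ r ∈ B := ⟨r, (hPRmem r).mpr hrP, rfl⟩
    rw [hBbot, LieSubmodule.mem_bot] at h1
    exact h1
  -- kernels agree
  have hker_iff : ∀ r : ↥R, αₗ r = 0 ↔ βₗ r = 0 := by
    intro r
    constructor
    · intro hr
      have h1 : π (r : (↥(coindHom F L I z S ρ))) = 0 := by
        have := congrArg (fun u : ↥T => (u : ↥(coindHom F L I z S ρ) ⧸ P)) hr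
        simpa [hα_apply] using this
      exact hβP r ((LieSubmodule.Quotient.mk_eq_zero P).mp h1)
    · intro hr
      apply Subtype.ext
      rw [hα_apply]
      have h1 : (r : (↥(coindHom F L I z S ρ))) ∈ P :=
        hk2 _ r.2.1 (hβ_zero_mem r hr)
      have h2 : π (r : (↥(coindHom F L I z S ρ))) = 0 := (LieSubmodule.Quotient.mk_eq_zero P).mpr h1
      rw [h2]
      rfl
  exact nonempty_lieModuleEquiv_of_maps αₗ βₗ hα_lie hβ_lie hαsur hβsur hker_iff

end Aux5

/-- Proposition `clifford`: let `L` be a finite-dimensional Lie algebra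
over a field of prime characteristic `p`, `I` an ideal of codimension one (with
complement spanned by `t ∉ I`), and `S` a finite-dimensional irreducible `I`-module.
Let `z = (ι t)^(pᵐ) + v` be a central element of `U(L)` with `v` of filtration degree
`< pᵐ`, let `O(L,I)` be the subalgebra of `U(L)` generated by `I` and `z`, and let `S`
be an `O(L,I)`-module (via `ρ`) extending its `I`-module structure.  Then every
composition factor of the restriction to `I` of the truncated coinduced module
`Hom_{O(L,I)}(U(L), S)` is isomorphic to `S`. -/
theorem composition_factors_of_truncated_coinduced
    (F : Type*) (L : Type*) [Field F] [LieRing L] [LieAlgebra F L]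
    [FiniteDimensional F L]
    (p : ℕ) [Fact p.Prime] [CharP F p]
    (I : LieIdeal F L) (t : L) (ht : t ∉ I)
    (hcodim : Module.finrank F (L ⧸ I) = 1)
    (S : Type*) [AddCommGroup S] [Module F S] [LieRingModule ↥I S] [LieModule F ↥I S]
    [FiniteDimensional F S]
    (hS : LieModule.IsIrreducible F ↥I S)
    (m : ℕ) (v : UniversalEnvelopingAlgebra F L)
    (hv : v ∈ ueaFiltration F L (p ^ m - 1))
    (z : UniversalEnvelopingAlgebra F L)
    (hz : z = (UniversalEnvelopingAlgebra.ι F t) ^ (p ^ m) + v)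
    (hcentral : z ∈ Subalgebra.center F (UniversalEnvelopingAlgebra F L))
    (ρ : ↥(truncO F L I z) →ₐ[F] Module.End F S)
    (hρ : ∀ (x : L) (hx : x ∈ I) (s : S),
      ρ ⟨UniversalEnvelopingAlgebra.ι F x,
        Algebra.subset_adjoin (Set.mem_union_left _ (Set.mem_image_of_mem _ hx))⟩ s =
        ⁅(⟨x, hx⟩ : ↥I), s⁆) :
    ∀ (P Q : LieSubmodule F ↥I ↥(coindHom F L I z S ρ)), P ≤ Q →
      LieModule.IsIrreducible F ↥I
        ↥(LieSubmodule.map (LieSubmodule.Quotient.mk' P) Q) →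
      Nonempty (↥(LieSubmodule.map (LieSubmodule.Quotient.mk' P) Q) ≃ₗ⁅F,↥I⁆ S) := by
  intro P Q hPQ hirr
  exact truncated_coinduced_main I t z ρ hS
    (pow_pos (Nat.Prime.pos Fact.out) m) hz hv
    (exists_codim_dec I t ht hcodim) hρ P Q hPQ hirr
end
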